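/- For a non-catastrophic encoder, for every S ∈ {I,Z}^{⊗(n-k)} and every non-identity k-qubit logical Pauli L, the memory output g_{S,L} of the transition E(I^{⊗m} ⊗ S ⊗ L) = h_{S,L} ⊗ g_{S,L} belongs to the finite-memory subgroup F₀. -/

import Mathlib

open scoped BigOperators

/-- The Pauli group on `j` qubits modulo its center, written additively:
an element `(a, b)` at each qubit corresponds to `X^a Z^b`. -/
abbrev Pauli (j : ℕ) := Fin j → (ZMod 2) × (ZMod 2)

/-- The standard symplectic form: two Pauli elements commute iff it vanishes. -/
def omega {j : ℕ} (v w : Pauli j) : ZMod 2 :=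
  ∑ i, ((v i).1 * (w i).2 + (w i).1 * (v i).2)

/-- A quantum convolutional encoder: a symplectic automorphism taking
(memory `m`, ancilla `s = n - k`, information `k`) to (physical `n`, memory `m`). -/
structure Encoder (m s k n : ℕ) where
  toEquiv : (Pauli m × Pauli s × Pauli k) ≃+ (Pauli n × Pauli m)
  symp : ∀ x y : Pauli m × Pauli s × Pauli k,
    omega (toEquiv x).1 (toEquiv y).1 + omega (toEquiv x).2 (toEquiv y).2
      = omega x.1 y.1 + omega x.2.1 y.2.1 + omega x.2.2 y.2.2

/-- `S ∈ {I, Z}^{⊗ s}`: the X-component vanishes. -/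
def isIZ {s : ℕ} (S : Pauli s) : Prop := ∀ i, (S i).1 = 0

/-- Pauli `Z` on the `i`-th qubit, identity elsewhere. -/
def Zi {s : ℕ} (i : Fin s) : Pauli s := fun j => (0, if j = i then 1 else 0)

/-- Pauli `X` on the `i`-th qubit, identity elsewhere. -/
def Xi {k : ℕ} (i : Fin k) : Pauli k := fun j => (if j = i then 1 else 0, 0)

/-- A standard path: at each step the ancilla input is in `{I,Z}^{⊗s}` and the
logical input is the identity. -/
def stdPath {m s k n : ℕ} (E : Encoder m s k n) (f : ℕ → Pauli m) : Prop :=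
  ∀ t, ∃ (S : Pauli s) (P : Pauli n), isIZ S ∧ E.toEquiv (f t, S, 0) = (P, f (t + 1))

/-- A finite-memory state: some standard path from it reaches the identity memory state. -/
def finiteMemory {m s k n : ℕ} (E : Encoder m s k n) (M : Pauli m) : Prop :=
  ∃ f : ℕ → Pauli m, stdPath E f ∧ f 0 = M ∧ ∃ t, f t = 0

/-- Membership in a zero physical-weight cycle. -/
def inZeroCycle {m s k n : ℕ} (E : Encoder m s k n) (M : Pauli m) : Prop :=
  ∃ (p : ℕ) (f : ℕ → Pauli m), 0 < p ∧ f 0 = M ∧ (∀ t, f (t + p) = f t) ∧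
    ∀ t, ∃ (S : Pauli s) (L : Pauli k), isIZ S ∧ E.toEquiv (f t, S, L) = (0, f (t + 1))

/-- Non-catastrophic: every edge of every zero physical-weight cycle has
identity logical label. -/
def nonCatastrophic {m s k n : ℕ} (E : Encoder m s k n) : Prop :=
  ∀ (p : ℕ) (f : ℕ → Pauli m) (S : ℕ → Pauli s) (L : ℕ → Pauli k),
    0 < p → (∀ t, f (t + p) = f t) →
    (∀ t, isIZ (S t) ∧ E.toEquiv (f t, S t, L t) = (0, f (t + 1))) →
    ∀ t, L t = 0


namespace NC

lemma zmod2_cases (c : ZMod 2) : c = 0 ∨ c = 1 := by revert c; decide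

lemma pauli_add_self {j : ℕ} (v : Pauli j) : v + v = 0 := by
  funext i
  show v i + v i = 0
  have : ∀ a : ZMod 2 × ZMod 2, a + a = 0 := by decide
  exact this (v i)

lemma eq_of_add_eq_zero {j : ℕ} {v w : Pauli j} (h : v + w = 0) : v = w := by
  have := congrArg (· + w) h
  simpa [add_assoc, pauli_add_self] using this

lemma omega_add_left {j : ℕ} (v v' w : Pauli j) :
    omega (v + v') w = omega v w + omega v' w := by
  unfold omega
  rw [← Finset.sum_add_distrib]
  refine Finset.sum_congr rfl fun i _ => ?_
  show ((v i + v' i).1 * _ + _ * (v i + v' i).2) = _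
  rw [Prod.fst_add, Prod.snd_add]; ring

lemma omega_comm {j : ℕ} (v w : Pauli j) : omega v w = omega w v := by
  unfold omega
  refine Finset.sum_congr rfl fun i _ => ?_
  ring

lemma omega_add_right {j : ℕ} (v w w' : Pauli j) :
    omega v (w + w') = omega v w + omega v w' := by
  rw [omega_comm, omega_add_left, omega_comm w v, omega_comm w' v]

lemma omega_zero_left {j : ℕ} (w : Pauli j) : omega 0 w = 0 := by
  unfold omega
  refine Finset.sum_eq_zero fun i _ => ?_
  show ((0 : Pauli j) i).1 * _ + _ * ((0 : Pauli j) i).2 = 0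
  have : ((0 : Pauli j) i) = 0 := rfl
  rw [this]
  simp

lemma omega_zero_right {j : ℕ} (w : Pauli j) : omega w 0 = 0 := by
  rw [omega_comm, omega_zero_left]

lemma omega_smul_left {j : ℕ} (c : ZMod 2) (v w : Pauli j) :
    omega (c • v) w = c * omega v w := by
  rcases zmod2_cases c with h | h <;> subst h
  · rw [zero_smul, omega_zero_left, zero_mul]
  · rw [one_smul, one_mul]

/-- `omega` as a bilinear form. -/
def oB (j : ℕ) : LinearMap.BilinForm (ZMod 2) (Pauli j) :=
  LinearMap.mk₂ (ZMod 2) (fun v w => omega v w)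
    (fun a b c => omega_add_left a b c)
    (fun c a b => omega_smul_left c a b)
    (fun a b c => omega_add_right a b c)
    (fun c a b => by
      show omega a (c • b) = c • omega a b
      rw [omega_comm, omega_smul_left, omega_comm a b, smul_eq_mul])

@[simp] lemma oB_apply {j : ℕ} (v w : Pauli j) : oB j v w = omega v w := rfl

lemma omega_Zi {j : ℕ} (v : Pauli j) (i : Fin j) : omega v (Zi i) = (v i).1 := by
  unfold omega Zi
  rw [Finset.sum_eq_single i]
  · simp
  · intro b _ hb; simp [hb]
  · intro hb; exact absurd (Finset.mem_univ i) hb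

lemma omega_Xi {j : ℕ} (v : Pauli j) (i : Fin j) : omega v (Xi i) = (v i).2 := by
  unfold omega Xi
  rw [Finset.sum_eq_single i]
  · simp
  · intro b _ hb; simp [hb]
  · intro hb; exact absurd (Finset.mem_univ i) hb

lemma omega_right_nondeg {j : ℕ} (v : Pauli j) (h : ∀ w, omega v w = 0) : v = 0 := by
  funext i
  have h1 := h (Zi i); rw [omega_Zi] at h1
  have h2 := h (Xi i); rw [omega_Xi] at h2
  show v i = 0
  have : v i = ((v i).1, (v i).2) := rfl
  rw [this, h1, h2]; rfl

lemma oB_nondeg (j : ℕ) : (oB j).Nondegenerate :=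
  ⟨fun v hv => omega_right_nondeg v hv,
    fun v hv => omega_right_nondeg v fun w => by rw [omega_comm]; exact hv w⟩

lemma oB_refl (j : ℕ) : (oB j).IsRefl := by
  intro v w h
  rw [oB_apply, omega_comm] at h
  exact h

lemma isIZ_omega {s : ℕ} {S S' : Pauli s} (h : isIZ S) (h' : isIZ S') :
    omega S S' = 0 := by
  unfold omega
  refine Finset.sum_eq_zero fun i _ => ?_
  rw [h i, h' i]
  ring


variable {m : ℕ}

/-- The sum form on `Pauli m × Pauli m`. -/
def oB2 (m : ℕ) : LinearMap.BilinForm (ZMod 2) (Pauli m × Pauli m) :=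
  LinearMap.mk₂ (ZMod 2) (fun x y => omega x.1 y.1 + omega x.2 y.2)
    (fun a b c => by
      show omega (a.1 + b.1) c.1 + omega (a.2 + b.2) c.2 = _
      rw [omega_add_left, omega_add_left]; ring)
    (fun c a b => by
      show omega (c • a.1) b.1 + omega (c • a.2) b.2 = c • _
      rw [omega_smul_left, omega_smul_left, smul_eq_mul]; ring)
    (fun a b c => by
      show omega a.1 (b.1 + c.1) + omega a.2 (b.2 + c.2) = _
      rw [omega_add_right, omega_add_right]; ring)
    (fun c a b => by
      show omega a.1 (c • b.1) + omega a.2 (c • b.2) = c • _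
      rw [omega_comm a.1, omega_comm a.2, omega_smul_left, omega_smul_left,
        omega_comm b.1, omega_comm b.2, smul_eq_mul]; ring)

@[simp] lemma oB2_apply (x y : Pauli m × Pauli m) :
    oB2 m x y = omega x.1 y.1 + omega x.2 y.2 := rfl

lemma oB2_nondeg : (oB2 m).Nondegenerate := by
  suffices hL : LinearMap.SeparatingLeft (oB2 m) from
    ⟨hL, fun y hy => hL y fun x => by rw [oB2_apply, omega_comm y.1, omega_comm y.2]; exact hy x⟩
  intro x hx
  have h1 : x.1 = 0 := by
    refine omega_right_nondeg _ fun w => ?_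
    have := hx (w, 0)
    rwa [oB2_apply, omega_zero_right, add_zero] at this
  have h2 : x.2 = 0 := by
    refine omega_right_nondeg _ fun w => ?_
    have := hx (0, w)
    rwa [oB2_apply, omega_zero_right, zero_add] at this
  exact Prod.ext h1 h2

lemma oB2_refl : (oB2 m).IsRefl := by
  intro x y hxy
  rw [oB2_apply, omega_comm y.1, omega_comm y.2]
  exact hxy

example : FiniteDimensional (ZMod 2) (Pauli m) := by infer_instance
example : FiniteDimensional (ZMod 2) (Pauli m × Pauli m) := by infer_instance
example : Finite (Pauli m) := by infer_instance

open LinearMap.BilinForm in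
lemma orth_sup {R M : Type*} [CommSemiring R] [AddCommMonoid M] [Module R M]
    (B : LinearMap.BilinForm R M) (A C : Submodule R M) :
    B.orthogonal (A ⊔ C) = B.orthogonal A ⊓ B.orthogonal C := by
  apply le_antisymm
  · exact le_inf (orthogonal_le le_sup_left) (orthogonal_le le_sup_right)
  · rintro x ⟨hA, hC⟩ y hy
    rcases Submodule.mem_sup.mp hy with ⟨a, ha, c, hc, rfl⟩
    show B (a + c) x = 0
    rw [map_add, LinearMap.add_apply, hA a ha, hC c hc, add_zero]

lemma orth_prod (A C : Submodule (ZMod 2) (Pauli m)) :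
    (oB2 m).orthogonal (A.prod C) = ((oB m).orthogonal A).prod ((oB m).orthogonal C) := by
  ext x
  constructor
  · intro hx
    constructor
    · intro a ha
      have h3 : omega a x.1 + omega (0 : Pauli m) x.2 = 0 := hx (a, 0) ⟨ha, Submodule.zero_mem C⟩
      show omega a x.1 = 0
      rwa [omega_zero_left, add_zero] at h3
    · intro c hc
      have h3 : omega (0 : Pauli m) x.1 + omega c x.2 = 0 := hx (0, c) ⟨Submodule.zero_mem A, hc⟩
      show omega c x.2 = 0
      rwa [omega_zero_left, zero_add] at h3
  · rintro ⟨h1, h2⟩ y ⟨hy1, hy2⟩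
    show omega y.1 x.1 + omega y.2 x.2 = 0
    have e1 : omega y.1 x.1 = 0 := h1 y.1 hy1
    have e2 : omega y.2 x.2 = 0 := h2 y.2 hy2
    rw [e1, e2, add_zero]

section Enc

variable {m s k n : ℕ} (E : Encoder m s k n)

lemma isIZ_zero : isIZ (0 : Pauli s) := fun _ => rfl

lemma E_zero : E.toEquiv (0, 0, 0) = ((0 : Pauli n), (0 : Pauli m)) := by
  have h1 : ((0, 0, 0) : Pauli m × Pauli s × Pauli k) = 0 := rfl
  have h2 : E.toEquiv 0 = 0 := E.toEquiv.map_zero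
  rw [h1, h2]
  rfl

lemma zero_stdPath : stdPath E (fun _ => (0 : Pauli m)) :=
  fun _ => ⟨0, 0, isIZ_zero, by simpa using E_zero E⟩

lemma finiteMemory_eventually {M : Pauli m} (hM : finiteMemory E M) :
    ∃ (f : ℕ → Pauli m) (t₀ : ℕ), stdPath E f ∧ f 0 = M ∧ ∀ u, t₀ ≤ u → f u = 0 := by
  obtain ⟨f, hf, h0, t₀, ht⟩ := hM
  refine ⟨fun u => if u < t₀ then f u else 0, t₀, ?_, ?_, ?_⟩
  · intro u
    by_cases h1 : u + 1 < t₀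
    · have h2 : u < t₀ := by omega
      simpa only [if_pos h1, if_pos h2] using hf u
    · by_cases h2 : u < t₀
      · have h3 : u + 1 = t₀ := by omega
        obtain ⟨S, P, hS, hE⟩ := hf u
        refine ⟨S, P, hS, ?_⟩
        simp only [if_pos h2, if_neg h1]
        rw [hE, h3, ht]
      · refine ⟨0, 0, isIZ_zero, ?_⟩
        simp only [if_neg h1, if_neg h2]
        simpa using E_zero E
  · by_cases h : 0 < t₀
    · simpa only [if_pos h] using h0
    · have ht0 : t₀ = 0 := by omega
      simp only [if_neg h]
      rw [← h0, ← ht0, ht]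
  · intro u hu
    simp only [if_neg (by omega : ¬ u < t₀)]

/-- The submodule of finite-memory states. -/
def Fsub : Submodule (ZMod 2) (Pauli m) where
  carrier := {M | finiteMemory E M}
  zero_mem' := ⟨fun _ => 0, zero_stdPath E, rfl, 0, rfl⟩
  add_mem' := by
    rintro a b ha hb
    obtain ⟨f, t₀, hf, hf0, hfz⟩ := finiteMemory_eventually E ha
    obtain ⟨g, t₁, hg, hg0, hgz⟩ := finiteMemory_eventually E hb
    refine ⟨fun u => f u + g u, ?_, by show f 0 + g 0 = a + b; rw [hf0, hg0], max t₀ t₁, ?_⟩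
    · intro u
      obtain ⟨S, P, hS, hEf⟩ := hf u
      obtain ⟨S', P', hS', hEg⟩ := hg u
      refine ⟨S + S', P + P', fun i => ?_, ?_⟩
      · show (S i + S' i).1 = 0
        rw [Prod.fst_add, hS i, hS' i, add_zero]
      · have h1 : ((f u + g u, S + S', (0 : Pauli k)) : Pauli m × Pauli s × Pauli k)
            = (f u, S, (0 : Pauli k)) + (g u, S', 0) := by
          simp [Prod.mk_add_mk]
        rw [h1, map_add, hEf, hEg, Prod.mk_add_mk]
    · show f (max t₀ t₁) + g (max t₀ t₁) = 0
      rw [hfz _ (le_max_left _ _), hgz _ (le_max_right _ _), add_zero]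
  smul_mem' := by
    intro c x hx
    rcases zmod2_cases c with h | h <;> subst h
    · rw [zero_smul]
      exact ⟨fun _ => 0, zero_stdPath E, rfl, 0, rfl⟩
    · rw [one_smul]; exact hx

lemma finiteMemory_of_step {N N' : Pauli m}
    (hstep : ∃ S P, isIZ S ∧ E.toEquiv (N, S, 0) = (P, N'))
    (hN' : finiteMemory E N') : finiteMemory E N := by
  obtain ⟨S, P, hS, hE⟩ := hstep
  obtain ⟨f, hf, hf0, t₀, ht⟩ := hN'
  refine ⟨fun u => match u with | 0 => N | (v+1) => f v, ?_, rfl, t₀ + 1, ht⟩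
  intro u
  match u with
  | 0 =>
    refine ⟨S, P, hS, ?_⟩
    show E.toEquiv (N, S, 0) = (P, f 0)
    rw [hf0]; exact hE
  | (v+1) => exact hf v

/-- The relation of standard transitions, as a submodule of pairs. -/
def Tsub : Submodule (ZMod 2) (Pauli m × Pauli m) where
  carrier := {x | ∃ S P, isIZ S ∧ E.toEquiv (x.1, S, 0) = (P, x.2)}
  zero_mem' := ⟨0, 0, isIZ_zero, by simpa using E_zero E⟩
  add_mem' := by
    rintro x y ⟨S, P, hS, hEx⟩ ⟨S', P', hS', hEy⟩
    refine ⟨S + S', P + P', fun i => ?_, ?_⟩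
    · show (S i + S' i).1 = 0
      rw [Prod.fst_add, hS i, hS' i, add_zero]
    · have h1 : (((x + y).1, S + S', (0 : Pauli k)) : Pauli m × Pauli s × Pauli k)
          = (x.1, S, (0 : Pauli k)) + (y.1, S', 0) := by
        simp [Prod.mk_add_mk]
      rw [h1, map_add, hEx, hEy, Prod.mk_add_mk]; rfl
  smul_mem' := by
    intro c x hx
    rcases zmod2_cases c with h | h <;> subst h
    · rw [zero_smul]; exact ⟨0, 0, isIZ_zero, by simpa using E_zero E⟩
    · rw [one_smul]; exact hx

/-- The relation of zero-physical-output transitions, as a submodule of pairs. -/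
def Zsub : Submodule (ZMod 2) (Pauli m × Pauli m) where
  carrier := {x | ∃ S L, isIZ S ∧ E.toEquiv (x.1, S, L) = (0, x.2)}
  zero_mem' := ⟨0, 0, isIZ_zero, by simpa using E_zero E⟩
  add_mem' := by
    rintro x y ⟨S, L, hS, hEx⟩ ⟨S', L', hS', hEy⟩
    refine ⟨S + S', L + L', fun i => ?_, ?_⟩
    · show (S i + S' i).1 = 0
      rw [Prod.fst_add, hS i, hS' i, add_zero]
    · have h1 : (((x + y).1, S + S', L + L') : Pauli m × Pauli s × Pauli k)
          = (x.1, S, L) + (y.1, S', L') := by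
        simp [Prod.mk_add_mk]
      rw [h1, map_add, hEx, hEy, Prod.mk_add_mk, add_zero]; rfl
  smul_mem' := by
    intro c x hx
    rcases zmod2_cases c with h | h <;> subst h
    · rw [zero_smul]; exact ⟨0, 0, isIZ_zero, by simpa using E_zero E⟩
    · rw [one_smul]; exact hx

lemma z2_add_self (a : ZMod 2) : a + a = 0 := by revert a; decide

set_option maxHeartbeats 1600000 in
lemma Zsub_eq_orth_Tsub : Zsub E = (oB2 m).orthogonal (Tsub E) := by
  apply le_antisymm
  · rintro x ⟨S, L, hS, hEx⟩ y ⟨S', P, hS', hEy⟩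
    show omega y.1 x.1 + omega y.2 x.2 = 0
    have key := E.symp (y.1, S', 0) (x.1, S, L)
    rw [hEx, hEy] at key
    dsimp only at key
    rw [isIZ_omega hS' hS] at key
    simp only [omega_zero_left, omega_zero_right, zero_add, add_zero] at key
    rw [key, z2_add_self]
  · intro x hx
    set w := E.toEquiv.symm (0, x.2) with hw
    have wE : E.toEquiv w = (0, x.2) := E.toEquiv.apply_symm_apply _
    have claim1 : w.1 = x.1 := by
      have hsum : x.1 + w.1 = 0 := by
        refine omega_right_nondeg _ fun N => ?_
        have hT : ((N, (E.toEquiv (N, 0, 0)).2) : Pauli m × Pauli m) ∈ Tsub E :=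
          ⟨0, (E.toEquiv (N, 0, 0)).1, isIZ_zero, Prod.mk.eta.symm⟩
        have horth : omega N x.1 + omega (E.toEquiv (N, 0, 0)).2 x.2 = 0 := hx _ hT
        have key := E.symp w (N, 0, 0)
        rw [wE] at key
        dsimp only at key
        simp only [omega_zero_left, omega_zero_right, zero_add, add_zero] at key
        rw [omega_add_left, ← key, omega_comm x.1 N, omega_comm x.2]
        exact horth
      exact (eq_of_add_eq_zero hsum).symm
    have claim2 : isIZ w.2.1 := by
      intro i
      have hT : (((0 : Pauli m), (E.toEquiv (0, Zi i, 0)).2) : Pauli m × Pauli m) ∈ Tsub E :=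
        ⟨Zi i, (E.toEquiv (0, Zi i, 0)).1, fun _ => rfl, Prod.mk.eta.symm⟩
      have horth : omega 0 x.1 + omega (E.toEquiv (0, Zi i, 0)).2 x.2 = 0 := hx _ hT
      rw [omega_zero_left, zero_add] at horth
      have key := E.symp w (0, Zi i, 0)
      rw [wE] at key
      dsimp only at key
      simp only [omega_zero_left, omega_zero_right, zero_add, add_zero] at key
      rw [← omega_Zi w.2.1 i, ← key, omega_comm]
      exact horth
    refine ⟨w.2.1, w.2.2, claim2, ?_⟩
    have hxw : ((x.1, w.2.1, w.2.2) : Pauli m × Pauli s × Pauli k) = w := by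
      rw [← claim1]
    rw [hxw, wE]

lemma mem_Zsub_zero {M : Pauli m} (h : ((M, 0) : Pauli m × Pauli m) ∈ Zsub E) : M = 0 := by
  obtain ⟨S, L, hS, hEz⟩ := h
  refine omega_right_nondeg M fun N => ?_
  have key := E.symp (M, S, L) (N, 0, 0)
  dsimp only at hEz
  rw [hEz] at key
  dsimp only at key
  simp only [omega_zero_left, omega_zero_right, zero_add, add_zero] at key
  exact key.symm

lemma succ_perp {M : Pauli m} (hM : M ∈ (oB m).orthogonal (Fsub E)) :
    ∃ M', M' ∈ (oB m).orthogonal (Fsub E) ∧ ((M, M') : Pauli m × Pauli m) ∈ Zsub E := by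
  classical
  set Fp : Submodule (ZMod 2) (Pauli m) := (oB m).orthogonal (Fsub E) with hFpdef
  set Y : Submodule (ZMod 2) (Pauli m × Pauli m) :=
    Zsub E ⊓ Submodule.prod ⊤ Fp with hYdef
  set D : Submodule (ZMod 2) (Pauli m) :=
    Y.map (LinearMap.fst (ZMod 2) (Pauli m) (Pauli m)) with hDdef
  have hYeq : Y = (oB2 m).orthogonal (Tsub E ⊔ Submodule.prod ⊥ (Fsub E)) := by
    rw [orth_sup, ← Zsub_eq_orth_Tsub, orth_prod, LinearMap.BilinForm.orthogonal_bot]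
  have hYperp : (oB2 m).orthogonal Y = Tsub E ⊔ Submodule.prod ⊥ (Fsub E) := by
    rw [hYeq, LinearMap.BilinForm.orthogonal_orthogonal oB2_nondeg oB2_refl]
  have hDF : (oB m).orthogonal D ≤ Fsub E := by
    intro N hN
    have hN0 : ((N, 0) : Pauli m × Pauli m) ∈ (oB2 m).orthogonal Y := by
      intro y hy
      show omega y.1 N + omega y.2 0 = 0
      rw [omega_zero_right, add_zero]
      exact hN y.1 ⟨y, hy, rfl⟩
    rw [hYperp] at hN0
    rcases Submodule.mem_sup.mp hN0 with ⟨t, hT, z, hz, hsum⟩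
    have hz1 : z.1 = 0 := hz.1
    have hz2 : z.2 ∈ Fsub E := hz.2
    have ht1 : t.1 = N := by
      have h1 := congrArg Prod.fst hsum
      rw [Prod.fst_add, hz1, add_zero] at h1
      exact h1
    have ht2 : t.2 = z.2 := by
      have h1 := congrArg Prod.snd hsum
      rw [Prod.snd_add] at h1
      exact eq_of_add_eq_zero h1
    obtain ⟨S, P, hS, hEt⟩ := hT
    rw [ht1] at hEt
    exact finiteMemory_of_step E ⟨S, P, hS, by rw [hEt, ht2]⟩ hz2
  have hFD : Fp ≤ D := by
    have h1 : Fp ≤ (oB m).orthogonal ((oB m).orthogonal D) :=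
      LinearMap.BilinForm.orthogonal_le hDF
    rwa [LinearMap.BilinForm.orthogonal_orthogonal (oB_nondeg m) (oB_refl m)] at h1
  obtain ⟨y, hy, hy1⟩ := Submodule.mem_map.mp (hFD hM)
  refine ⟨y.2, (hy.2 : y ∈ Submodule.prod ⊤ Fp).2, ?_⟩
  have hyM : y = (M, y.2) := by
    have h1 : y.1 = M := hy1
    rw [← h1]
  rw [← hyM]
  exact hy.1

lemma perp_inZeroCycle {M : Pauli m} (hM : M ∈ (oB m).orthogonal (Fsub E)) :
    inZeroCycle E M := by
  classical
  have hstep : ∀ v : {v : Pauli m // v ∈ (oB m).orthogonal (Fsub E)},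
      ∃ w : {v : Pauli m // v ∈ (oB m).orthogonal (Fsub E)},
        ((v.1, w.1) : Pauli m × Pauli m) ∈ Zsub E := by
    intro v
    obtain ⟨M', hM', hz⟩ := succ_perp E v.2
    exact ⟨⟨M', hM'⟩, hz⟩
  choose nxt hnxt using hstep
  set x : ℕ → {v : Pauli m // v ∈ (oB m).orthogonal (Fsub E)} :=
    fun t => nxt^[t] ⟨M, hM⟩ with hxdef
  have hx0 : (x 0).1 = M := rfl
  have hxs : ∀ t, x (t + 1) = nxt (x t) := fun t => Function.iterate_succ_apply' nxt t _
  have hedge : ∀ t, (((x t).1, (x (t + 1)).1) : Pauli m × Pauli m) ∈ Zsub E := by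
    intro t
    rw [hxs t]
    exact hnxt (x t)
  obtain ⟨a, b, hlt, heq⟩ : ∃ a b, a < b ∧ x a = x b := by
    obtain ⟨a, b, hab, heq⟩ := Finite.exists_ne_map_eq_of_infinite x
    rcases lt_or_gt_of_ne hab with hc | hc
    · exact ⟨a, b, hc, heq⟩
    · exact ⟨b, a, hc, heq.symm⟩
  set p := b - a with hpdef
  have hppos : 0 < p := by omega
  set xx : ℕ → Pauli m := fun t => (x t).1 with hxxdef
  have hzedge : ∀ t, ((xx t + xx (t + p), xx (t + 1) + xx (t + 1 + p)) : Pauli m × Pauli m)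
      ∈ Zsub E := by
    intro t
    have h1 := hedge t
    have h2 := hedge (t + p)
    have h3 := Submodule.add_mem (Zsub E) h1 h2
    rw [Prod.mk_add_mk] at h3
    have h4 : t + p + 1 = t + 1 + p := by omega
    rw [h4] at h3
    exact h3
  have hza : xx a + xx (a + p) = 0 := by
    have h1 : a + p = b := by omega
    rw [h1, show xx a = xx b from congrArg Subtype.val heq, pauli_add_self]
  have hdown : ∀ d, xx (a - d) + xx (a - d + p) = 0 := by
    intro d
    induction d with
    | zero => simpa using hza
    | succ d ih =>
      by_cases hda : d < a
      · have hstep1 : a - (d + 1) + 1 = a - d := by omega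
        have h := hzedge (a - (d + 1))
        rw [hstep1, ih] at h
        exact mem_Zsub_zero E h
      · have h1 : a - (d + 1) = a - d := by omega
        rw [h1]
        exact ih
  have hx0p : xx p = xx 0 := by
    have h1 := hdown a
    rw [Nat.sub_self, Nat.zero_add] at h1
    exact (eq_of_add_eq_zero h1).symm
  refine ⟨p, fun t => xx (t % p), hppos, ?_, ?_, ?_⟩
  · show xx (0 % p) = M
    rw [Nat.zero_mod]
    exact hx0
  · intro t
    show xx ((t + p) % p) = xx (t % p)
    rw [Nat.add_mod_right]
  · intro t
    have hmod : (t + 1) % p = (t % p + 1) % p := by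
      conv_lhs => rw [Nat.add_mod]
      conv_rhs => rw [Nat.add_mod, Nat.mod_mod_of_dvd _ dvd_rfl]
    by_cases hc : t % p + 1 < p
    · have h1 : (t + 1) % p = t % p + 1 := by rw [hmod, Nat.mod_eq_of_lt hc]
      show ∃ S L, isIZ S ∧ E.toEquiv (xx (t % p), S, L) = (0, xx ((t + 1) % p))
      rw [h1]
      exact hedge (t % p)
    · have hr : t % p < p := Nat.mod_lt _ hppos
      have hpe : t % p + 1 = p := by omega
      have h1 : (t + 1) % p = 0 := by rw [hmod, hpe, Nat.mod_self]
      show ∃ S L, isIZ S ∧ E.toEquiv (xx (t % p), S, L) = (0, xx ((t + 1) % p))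
      rw [h1]
      have h := hedge (t % p)
      rw [hpe] at h
      have h2 : (((x (t % p)) : Pauli m), ((x 0) : Pauli m)) ∈ Zsub E := by
        have e : ((x p) : Pauli m) = ((x 0) : Pauli m) := hx0p
        rwa [e] at h
      exact h2

lemma out_perp_cycle (hE : nonCatastrophic E) {S : Pauli s} {L : Pauli k}
    {h : Pauli n} {g : Pauli m} (hS : isIZ S)
    (hout : E.toEquiv (0, S, L) = (h, g)) {M : Pauli m} (hM : inZeroCycle E M) :
    omega g M = 0 := by
  obtain ⟨p, f, hp, hf0, hper, hedges⟩ := hM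
  choose St Lt hSt hEt using hedges
  have hL0 := hE p f St Lt hp hper (fun t => ⟨hSt t, hEt t⟩)
  have key := E.symp (0, S, L) (f (p - 1), St (p - 1), Lt (p - 1))
  rw [hout, hEt (p - 1), hL0 (p - 1)] at key
  dsimp only at key
  rw [isIZ_omega hS (hSt (p - 1))] at key
  simp only [omega_zero_left, omega_zero_right, zero_add, add_zero] at key
  have hidx : p - 1 + 1 = p := by omega
  rw [hidx] at key
  have hfp : f p = f 0 := by
    have h1 := hper 0
    rwa [Nat.zero_add] at h1
  rw [hfp, hf0] at key
  exact key


end Enc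

end NC

theorem noncatastrophic_logical_outputs_finite_memory {m s k n : ℕ}
    (E : Encoder m s k n) (hE : nonCatastrophic E)
    (S : Pauli s) (L : Pauli k) (hS : isIZ S) (hL : L ≠ 0)
    (h : Pauli n) (g : Pauli m)
    (hout : E.toEquiv (0, S, L) = (h, g)) :
    finiteMemory E g := by
  have hmem : g ∈ (NC.oB m).orthogonal ((NC.oB m).orthogonal (NC.Fsub E)) := by
    intro N hN
    show omega N g = 0
    rw [NC.omega_comm]
    exact NC.out_perp_cycle E hE hS hout (NC.perp_inZeroCycle E hN)
  rwa [LinearMap.BilinForm.orthogonal_orthogonal (NC.oB_nondeg m) (NC.oB_refl m)] at hmem
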